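/- arXiv:2204.01941 — 2 statements merged into one kernel-verified Lean document; each statement's English description precedes it below -/
import Mathlib

section
/- Let {pᵢ} and {qᵢ} be orthonormal polynomial families wrt probability distributions μ and ν respectively, and let C be the upper triangular connection coefficient matrix defined by p_s = Σ_{i≤s} C_{i,s} qᵢ. Then C_{i,j} = ∫ qᵢ pⱼ dν for all i ≤ j, and the entries satisfy the recurrence C_{0,0}=1, C_{0,1} = (γ₀−α₀)/β₀, C_{1,1} = δ₀/β₀, and for i,j ≥ 0: C_{i,j} = (δ_{i−1} C_{i−1,j−1} + (γᵢ − α_{j−1}) C_{i,j−1} + δᵢ C_{i+1,j−1} − β_{j−2} C_{i,j−2})/β_{j−1}, where (αᵢ, βᵢ) and (γᵢ, δᵢ) are the three-term recurrence coefficients for μ and ν respectively. -/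
open MeasureTheory Polynomial

lemma poly_integrable_aux (ν : Measure ℝ) [IsProbabilityMeasure ν]
    (hmom : ∀ m : ℕ, Integrable (fun x => x ^ m) ν) (r : Polynomial ℝ) :
    Integrable (fun x => r.eval x) ν := by
  induction r using Polynomial.induction_on' with
  | add f g hf hg => simp only [Polynomial.eval_add]; exact hf.add hg
  | monomial n a => simpa [Polynomial.eval_monomial] using (hmom n).const_mul a

/-- Let `{pᵢ}` and `{qᵢ}` be orthonormal polynomial families with respect to probability
distributions `μ` and `ν` respectively, with three-term recurrence coefficients
`(αᵢ, βᵢ)` and `(γᵢ, δᵢ)`, and let `C` be the upper triangular connection coefficient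
matrix defined by `p_s = ∑_{i ≤ s} C_{i,s} qᵢ`.  Then `C_{i,j} = ∫ qᵢ pⱼ dν` for all
`i ≤ j`, and the entries satisfy `C_{0,0} = 1`, `C_{0,1} = (γ₀ − α₀)/β₀`,
`C_{1,1} = δ₀/β₀`, and for `i, j ≥ 0` (dropping terms with out-of-range indices):
`C_{i,j} = (δ_{i−1} C_{i−1,j−1} + (γᵢ − α_{j−1}) C_{i,j−1} + δᵢ C_{i+1,j−1}
− β_{j−2} C_{i,j−2}) / β_{j−1}`. -/
theorem connection_coefficients_formula_and_recurrence
    (μ ν : Measure ℝ) [IsProbabilityMeasure μ] [IsProbabilityMeasure ν]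
    (hmomμ : ∀ m : ℕ, Integrable (fun x => x ^ m) μ)
    (hmomν : ∀ m : ℕ, Integrable (fun x => x ^ m) ν)
    (p q : ℕ → Polynomial ℝ)
    (hdegp : ∀ i, (p i).natDegree = i) (hdegq : ∀ i, (q i).natDegree = i)
    (hleadp : ∀ i, 0 < (p i).leadingCoeff) (hleadq : ∀ i, 0 < (q i).leadingCoeff)
    (horthp : ∀ i j, (∫ x, (p i).eval x * (p j).eval x ∂μ) =
      if i = j then (1 : ℝ) else 0)
    (horthq : ∀ i j, (∫ x, (q i).eval x * (q j).eval x ∂ν) =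
      if i = j then (1 : ℝ) else 0)
    (α β γ δ : ℕ → ℝ) (hβ : ∀ i, 0 < β i) (hδ : ∀ i, 0 < δ i)
    (hrecp0 : X * p 0 = Polynomial.C (α 0) * p 0 + Polynomial.C (β 0) * p 1)
    (hrecp : ∀ i, X * p (i + 1) = Polynomial.C (β i) * p i +
      Polynomial.C (α (i + 1)) * p (i + 1) + Polynomial.C (β (i + 1)) * p (i + 2))
    (hrecq0 : X * q 0 = Polynomial.C (γ 0) * q 0 + Polynomial.C (δ 0) * q 1)
    (hrecq : ∀ i, X * q (i + 1) = Polynomial.C (δ i) * q i +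
      Polynomial.C (γ (i + 1)) * q (i + 1) + Polynomial.C (δ (i + 1)) * q (i + 2))
    (C : ℕ → ℕ → ℝ)
    (hC : ∀ s, p s = ∑ i ∈ Finset.range (s + 1), Polynomial.C (C i s) * q i)
    (hCtri : ∀ i j, j < i → C i j = 0) :
    (∀ i j, i ≤ j → C i j = ∫ x, (q i).eval x * (p j).eval x ∂ν) ∧
    C 0 0 = 1 ∧
    C 0 1 = (γ 0 - α 0) / β 0 ∧
    C 1 1 = δ 0 / β 0 ∧
    (∀ j : ℕ, 2 ≤ j →
      C 0 j = ((γ 0 - α (j - 1)) * C 0 (j - 1) + δ 0 * C 1 (j - 1) -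
        β (j - 2) * C 0 (j - 2)) / β (j - 1)) ∧
    (∀ i j : ℕ, 1 ≤ i → 2 ≤ j →
      C i j = (δ (i - 1) * C (i - 1) (j - 1) + (γ i - α (j - 1)) * C i (j - 1) +
        δ i * C (i + 1) (j - 1) - β (j - 2) * C i (j - 2)) / β (j - 1)) := by
  have hint : ∀ r : Polynomial ℝ, Integrable (fun x => r.eval x) ν :=
    poly_integrable_aux ν hmomν
  have hint2 : ∀ r s : Polynomial ℝ, Integrable (fun x => r.eval x * s.eval x) ν := by
    intro r s
    simpa [Polynomial.eval_mul] using hint (r * s)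
  -- the integral formula, for ALL i j
  have hform : ∀ i j, C i j = ∫ x, (q i).eval x * (p j).eval x ∂ν := by
    intro i j
    have h1 : (fun x => (q i).eval x * (p j).eval x)
        = fun x => ∑ k ∈ Finset.range (j + 1), C k j * ((q i).eval x * (q k).eval x) := by
      funext x
      rw [hC j, eval_finset_sum, Finset.mul_sum]
      refine Finset.sum_congr rfl fun k _ => ?_
      simp only [eval_mul, eval_C]
      ring
    rw [h1, integral_finset_sum _ (fun k _ => (hint2 (q i) (q k)).const_mul _)]
    simp only [integral_const_mul, horthq i, mul_ite, mul_one, mul_zero,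
      Finset.sum_ite_eq, Finset.mem_range, Nat.lt_succ_iff]
    by_cases h : i ≤ j
    · simp [h]
    · simp [h, hCtri i j (by omega)]
  have hform2 : ∀ i j, C i j = ∫ x, (p j).eval x * (q i).eval x ∂ν := by
    intro i j
    rw [hform i j]
    exact integral_congr_ae (Filter.Eventually.of_forall fun x => mul_comm _ _)
  -- linearity helpers
  have hlin2 : ∀ (a b : ℝ) (u v f : Polynomial ℝ),
      (∫ x, (Polynomial.C a * u + Polynomial.C b * v).eval x * f.eval x ∂ν)
      = a * (∫ x, u.eval x * f.eval x ∂ν) + b * (∫ x, v.eval x * f.eval x ∂ν) := by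
    intro a b u v f
    have h1 : (fun x => (Polynomial.C a * u + Polynomial.C b * v).eval x * f.eval x)
        = fun x => a * (u.eval x * f.eval x) + b * (v.eval x * f.eval x) := by
      funext x; simp only [eval_add, eval_mul, eval_C]; ring
    rw [h1, integral_add ((hint2 u f).const_mul a) ((hint2 v f).const_mul b),
      integral_const_mul, integral_const_mul]
  have hlin3 : ∀ (a b c : ℝ) (u v w f : Polynomial ℝ),
      (∫ x, (Polynomial.C a * u + Polynomial.C b * v + Polynomial.C c * w).eval x * f.eval x ∂ν)
      = a * (∫ x, u.eval x * f.eval x ∂ν) + b * (∫ x, v.eval x * f.eval x ∂ν)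
        + c * (∫ x, w.eval x * f.eval x ∂ν) := by
    intro a b c u v w f
    have h1 : (fun x => (Polynomial.C a * u + Polynomial.C b * v + Polynomial.C c * w).eval x
          * f.eval x)
        = fun x => a * (u.eval x * f.eval x)
            + (b * (v.eval x * f.eval x) + c * (w.eval x * f.eval x)) := by
      funext x; simp only [eval_add, eval_mul, eval_C]; ring
    have hvw : Integrable (fun x => b * (v.eval x * f.eval x)
        + c * (w.eval x * f.eval x)) ν :=
      ((hint2 v f).const_mul b).add ((hint2 w f).const_mul c)
    rw [h1, integral_add ((hint2 u f).const_mul a) hvw,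
      integral_add ((hint2 v f).const_mul b) ((hint2 w f).const_mul c),
      integral_const_mul, integral_const_mul, integral_const_mul]
    ring
  -- expansions
  have hXq0 : ∀ j, (∫ x, (X * q 0).eval x * (p j).eval x ∂ν)
      = γ 0 * C 0 j + δ 0 * C 1 j := by
    intro j
    rw [hrecq0, hlin2, ← hform 0 j, ← hform 1 j]
  have hXq : ∀ k j, (∫ x, (X * q (k + 1)).eval x * (p j).eval x ∂ν)
      = δ k * C k j + γ (k + 1) * C (k + 1) j + δ (k + 1) * C (k + 2) j := by
    intro k j
    rw [hrecq k, hlin3, ← hform k j, ← hform (k + 1) j, ← hform (k + 2) j]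
  have hXp0 : ∀ i, (∫ x, (X * p 0).eval x * (q i).eval x ∂ν)
      = α 0 * C i 0 + β 0 * C i 1 := by
    intro i
    rw [hrecp0, hlin2, ← hform2 i 0, ← hform2 i 1]
  have hXp : ∀ i j, (∫ x, (X * p (j + 1)).eval x * (q i).eval x ∂ν)
      = β j * C i j + α (j + 1) * C i (j + 1) + β (j + 1) * C i (j + 2) := by
    intro i j
    rw [hrecp j, hlin3, ← hform2 i j, ← hform2 i (j + 1), ← hform2 i (j + 2)]
  have hcross : ∀ i j, (∫ x, (X * q i).eval x * (p j).eval x ∂ν)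
      = ∫ x, (X * p j).eval x * (q i).eval x ∂ν :=
    fun i j => integral_congr_ae (Filter.Eventually.of_forall fun x => by
      simp only [eval_mul, eval_X]; ring)
  -- C 0 0 = 1
  have hp0 : p 0 = Polynomial.C 1 := by
    obtain ⟨c, hc⟩ := Polynomial.natDegree_eq_zero.mp (hdegp 0)
    have h1 := horthp 0 0
    rw [← hc] at h1 ⊢
    simp only [eval_C, if_pos rfl, integral_const, measure_univ, ENNReal.toReal_one,
      smul_eq_mul, one_mul] at h1
    norm_num at h1
    have hcpos : 0 < c := by
      have := hleadp 0
      rwa [← hc, Polynomial.leadingCoeff_C] at this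
    have : c = 1 := by nlinarith
    rw [this]
  have hq0 : q 0 = Polynomial.C 1 := by
    obtain ⟨c, hc⟩ := Polynomial.natDegree_eq_zero.mp (hdegq 0)
    have h1 := horthq 0 0
    rw [← hc] at h1 ⊢
    simp only [eval_C, if_pos rfl, integral_const, measure_univ, ENNReal.toReal_one,
      smul_eq_mul, one_mul] at h1
    norm_num at h1
    have hcpos : 0 < c := by
      have := hleadq 0
      rwa [← hc, Polynomial.leadingCoeff_C] at this
    have : c = 1 := by nlinarith
    rw [this]
  have hC00 : C 0 0 = 1 := by
    rw [hform 0 0, hp0, hq0]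
    simp
  have hC10 : C 1 0 = 0 := hCtri 1 0 (by omega)
  have hC20 : C 2 0 = 0 := hCtri 2 0 (by omega)
  refine ⟨fun i j _ => hform i j, hC00, ?_, ?_, ?_, ?_⟩
  · -- C 0 1
    have e := (hXq0 0).symm.trans ((hcross 0 0).trans (hXp0 0))
    rw [eq_div_iff (hβ 0).ne']
    rw [hC00, hC10] at e
    linarith
  · -- C 1 1
    have e := (hXq 0 0).symm.trans ((hcross 1 0).trans (hXp0 1))
    rw [eq_div_iff (hβ 0).ne']
    rw [hC00, hC10, hC20] at e
    linarith
  · -- C 0 j, j ≥ 2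
    intro j hj
    obtain ⟨m, rfl⟩ : ∃ m, j = m + 2 := ⟨j - 2, by omega⟩
    have e := (hXq0 (m + 1)).symm.trans ((hcross 0 (m + 1)).trans (hXp 0 m))
    have h2 : m + 2 - 1 = m + 1 := by omega
    have h3 : m + 2 - 2 = m := by omega
    rw [h2, h3, eq_div_iff (hβ (m + 1)).ne']
    linear_combination -e
  · -- general case
    intro i j hi hj
    obtain ⟨k, rfl⟩ : ∃ k, i = k + 1 := ⟨i - 1, by omega⟩
    obtain ⟨m, rfl⟩ : ∃ m, j = m + 2 := ⟨j - 2, by omega⟩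
    have e := (hXq k (m + 1)).symm.trans ((hcross (k + 1) (m + 1)).trans (hXp (k + 1) m))
    have h1 : k + 1 - 1 = k := by omega
    have h2 : m + 2 - 1 = m + 1 := by omega
    have h3 : m + 2 - 2 = m := by omega
    rw [h1, h2, h3, eq_div_iff (hβ (m + 1)).ne',
      show k + 1 + 1 = k + 2 by omega]
    linear_combination -e
end

section
/- Let f be 1-Lipschitz on [−1,1] and let q_n be the Jackson-damped degree-n Chebyshev approximant or interpolant of f, obtained by multiplying the k-th Chebyshev coefficient by the Jackson damping coefficient ρ_k = ((n−k+2)cos(kπ/(n+2)) + sin(kπ/(n+2))cot(π/(n+2)))/(n+2). Then ‖f − q_n‖_{[−1,1]} ≤ (π²/2)(n+2)⁻¹. -/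
open Real Finset Polynomial intervalIntegral


lemma sum_cos_tel (a d : ℝ) (N : ℕ) :
    2 * Real.sin (d/2) * ∑ j ∈ Finset.range N, Real.cos (a + j * d)
      = Real.sin (a + N * d - d/2) - Real.sin (a - d/2) := by
  induction N with
  | zero => simp [sq]
  | succ N ih =>
    rw [Finset.sum_range_succ, mul_add]
    have h := Real.sin_sub_sin (a + (N+1) * d - d/2) (a + N * d - d/2)
    push_cast
    push_cast at ih
    have : (a + (N+1) * d - d/2 - (a + N * d - d/2)) / 2 = d / 2 := by ring
    rw [this] at h
    have : (a + (N+1) * d - d/2 + (a + N * d - d/2)) / 2 = a + N * d := by ring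
    rw [this] at h
    linarith [ih]

lemma coeff_id (n k : ℕ) (hk : k ≤ n) (α : ℝ) (hα : α = Real.pi / (n+2)) :
    ∑ l ∈ Finset.range (n+1-k), Real.sin ((l+1)*α) * Real.sin ((l+(k:ℝ)+1)*α)
      = (((n:ℝ)-k+2) * Real.cos (k*α) + Real.sin (k*α) * (Real.cos α / Real.sin α)) / 2 := by
  have hαpos : 0 < α := by
    rw [hα]; positivity
  have hαlt : α < Real.pi := by
    rw [hα]
    rw [div_lt_iff₀ (by positivity)]
    nlinarith [Real.pi_pos]
  have hs : Real.sin α ≠ 0 := ne_of_gt (Real.sin_pos_of_pos_of_lt_pi hαpos hαlt)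
  have hterm : ∀ l : ℕ, Real.sin ((l+1)*α) * Real.sin ((l+(k:ℝ)+1)*α)
      = (Real.cos ((k:ℝ)*α) - Real.cos (((k:ℝ)+2)*α + l*(2*α)))/2 := by
    intro l
    have h1 : Real.cos (((k:ℝ)+2)*α + l*(2*α))
        = Real.cos (((l:ℝ)+1)*α) * Real.cos (((l:ℝ)+(k:ℝ)+1)*α)
          - Real.sin (((l:ℝ)+1)*α) * Real.sin (((l:ℝ)+(k:ℝ)+1)*α) := by
      rw [show ((k:ℝ)+2)*α + l*(2*α) = ((l:ℝ)+1)*α + ((l:ℝ)+(k:ℝ)+1)*α by ring]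
      exact Real.cos_add _ _
    have h2 : Real.cos ((k:ℝ)*α)
        = Real.cos (((l:ℝ)+(k:ℝ)+1)*α) * Real.cos (((l:ℝ)+1)*α)
          + Real.sin (((l:ℝ)+(k:ℝ)+1)*α) * Real.sin (((l:ℝ)+1)*α) := by
      rw [show ((k:ℝ)*α) = ((l:ℝ)+(k:ℝ)+1)*α - ((l:ℝ)+1)*α by ring]
      exact Real.cos_sub _ _
    linarith
  rw [Finset.sum_congr rfl (fun l _ => hterm l)]
  have htel := sum_cos_tel (((k:ℝ)+2)*α) (2*α) (n+1-k)
  have hNc : ((n+1-k : ℕ) : ℝ) = (n:ℝ)+1-k := by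
    push_cast [Nat.cast_sub (by omega : k ≤ n+1)]; ring
  rw [hNc] at htel
  have harg1 : ((k:ℝ)+2)*α + ((n:ℝ)+1-k) * (2*α) - (2*α)/2 = 2*Real.pi - ((k:ℝ)+1)*α := by
    have : ((n:ℝ)+2)*α = Real.pi := by rw [hα]; field_simp
    nlinarith [this]
  have harg2 : ((k:ℝ)+2)*α - (2*α)/2 = ((k:ℝ)+1)*α := by ring
  rw [harg1, harg2] at htel
  have hsin2 : Real.sin (2*Real.pi - ((k:ℝ)+1)*α) = - Real.sin (((k:ℝ)+1)*α) := by
    rw [Real.sin_sub]; simp [Real.sin_two_pi, Real.cos_two_pi]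
  rw [hsin2] at htel
  have h2a : Real.sin ((2*α)/2) = Real.sin α := by norm_num
  rw [h2a] at htel
  -- htel : 2 * sin α * ∑ cos(...) = -sin((k+1)α) - sin((k+1)α)
  have hsum : ∑ l ∈ Finset.range (n+1-k), Real.cos (((k:ℝ)+2)*α + l*(2*α))
      = - Real.sin (((k:ℝ)+1)*α) / Real.sin α := by
    rw [eq_div_iff hs]
    linarith [htel]
  have hsplit : ∑ l ∈ Finset.range (n+1-k),
      (Real.cos ((k:ℝ)*α) - Real.cos (((k:ℝ)+2)*α + l*(2*α)))/2
      = (((n+1-k:ℕ):ℝ) * Real.cos ((k:ℝ)*α)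
          - ∑ l ∈ Finset.range (n+1-k), Real.cos (((k:ℝ)+2)*α + l*(2*α)))/2 := by
    rw [← Finset.sum_div, Finset.sum_sub_distrib, Finset.sum_const, Finset.card_range,
      nsmul_eq_mul, sub_div]
  rw [hsplit, hsum, hNc]
  have hsa : Real.sin (((k:ℝ)+1)*α) = Real.sin ((k:ℝ)*α) * Real.cos α + Real.cos ((k:ℝ)*α) * Real.sin α := by
    rw [show ((k:ℝ)+1)*α = (k:ℝ)*α + α by ring]; exact Real.sin_add _ _
  rw [hsa]
  field_simp
  ring

lemma icc_to_range {M : Type*} [AddCommMonoid M] (m : ℕ) (f : ℕ → M) :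
    ∑ k ∈ Finset.Icc 1 m, f k = ∑ i ∈ Finset.range m, f (1+i) := by
  rw [← Finset.Ico_add_one_right_eq_Icc, Finset.sum_Ico_eq_sum_range]
  simp

lemma band (s : ℕ → ℝ) (t : ℝ) (N : ℕ) :
    ∑ j ∈ Finset.range (N+1), ∑ l ∈ Finset.range (N+1),
        s j * s l * Real.cos (((j:ℝ)-(l:ℝ))*t)
      = (∑ j ∈ Finset.range (N+1), (s j)^2)
        + ∑ k ∈ Finset.Icc 1 N, 2*Real.cos ((k:ℝ)*t) * ∑ l ∈ Finset.range (N+1-k), s l * s (l+k) := by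
  induction N with
  | zero => simp [sq]
  | succ N ih =>
    -- expand LHS
    have hinner : ∀ j : ℕ, ∑ l ∈ Finset.range (N+2), s j * s l * Real.cos (((j:ℝ)-(l:ℝ))*t)
        = (∑ l ∈ Finset.range (N+1), s j * s l * Real.cos (((j:ℝ)-(l:ℝ))*t))
          + s j * s (N+1) * Real.cos ((((N:ℝ)+1)-(j:ℝ))*t) := by
      intro j
      rw [Finset.sum_range_succ]
      congr 1
      push_cast
      rw [show ((j:ℝ)-((N:ℝ)+1))*t = -((((N:ℝ)+1)-(j:ℝ))*t) by ring, Real.cos_neg]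
    calc ∑ j ∈ Finset.range (N+2), ∑ l ∈ Finset.range (N+2),
          s j * s l * Real.cos (((j:ℝ)-(l:ℝ))*t)
        = ∑ j ∈ Finset.range (N+2), ((∑ l ∈ Finset.range (N+1), s j * s l * Real.cos (((j:ℝ)-(l:ℝ))*t))
            + s j * s (N+1) * Real.cos ((((N:ℝ)+1)-(j:ℝ))*t)) := by
          exact Finset.sum_congr rfl (fun j _ => hinner j)
      _ = (∑ j ∈ Finset.range (N+1), ∑ l ∈ Finset.range (N+1), s j * s l * Real.cos (((j:ℝ)-(l:ℝ))*t))
            + (∑ l ∈ Finset.range (N+1), s (N+1) * s l * Real.cos ((((N:ℝ)+1)-(l:ℝ))*t))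
            + ((∑ j ∈ Finset.range (N+1), s j * s (N+1) * Real.cos ((((N:ℝ)+1)-(j:ℝ))*t))
                + (s (N+1))^2) := by
          rw [Finset.sum_add_distrib, Finset.sum_range_succ, Finset.sum_range_succ (fun j =>
            s j * s (N+1) * Real.cos ((((N:ℝ)+1)-(j:ℝ))*t))]
          push_cast
          rw [show (((N:ℝ)+1)-((N:ℝ)+1))*t = 0 by ring, Real.cos_zero]
          ring
      _ = (∑ j ∈ Finset.range (N+1), (s j)^2)
            + (∑ k ∈ Finset.Icc 1 N, 2*Real.cos ((k:ℝ)*t) * ∑ l ∈ Finset.range (N+1-k), s l * s (l+k))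
            + 2 * ∑ j ∈ Finset.range (N+1), s j * s (N+1) * Real.cos ((((N:ℝ)+1)-(j:ℝ))*t)
            + (s (N+1))^2 := by
          rw [ih]
          have : ∑ l ∈ Finset.range (N+1), s (N+1) * s l * Real.cos ((((N:ℝ)+1)-(l:ℝ))*t)
              = ∑ l ∈ Finset.range (N+1), s l * s (N+1) * Real.cos ((((N:ℝ)+1)-(l:ℝ))*t) := by
            exact Finset.sum_congr rfl (fun l _ => by ring)
          rw [this]; ring
      _ = (∑ j ∈ Finset.range (N+2), (s j)^2)
            + ∑ k ∈ Finset.Icc 1 (N+1), 2*Real.cos ((k:ℝ)*t) * ∑ l ∈ Finset.range (N+2-k), s l * s (l+k) := by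
          -- rewrite the Icc (N+1) sum
          have hsplit : ∀ k ∈ Finset.Icc 1 (N+1),
              2*Real.cos ((k:ℝ)*t) * ∑ l ∈ Finset.range (N+2-k), s l * s (l+k)
              = 2*Real.cos ((k:ℝ)*t) * ∑ l ∈ Finset.range (N+1-k), s l * s (l+k)
                + 2*Real.cos ((k:ℝ)*t) * (s (N+1-k) * s (N+1)) := by
            intro k hk
            simp only [Finset.mem_Icc] at hk
            have h1 : N+2-k = (N+1-k)+1 := by omega
            have h2 : N+1-k+k = N+1 := by omega
            rw [h1, Finset.sum_range_succ, h2]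
            ring
          have hlast : ∀ k ∈ Finset.Icc 1 (N+1),
              (2*Real.cos ((k:ℝ)*t) * ∑ l ∈ Finset.range (N+1-k), s l * s (l+k))
              = (if k ≤ N then 2*Real.cos ((k:ℝ)*t) * ∑ l ∈ Finset.range (N+1-k), s l * s (l+k) else 0) := by
            intro k hk
            simp only [Finset.mem_Icc] at hk
            by_cases h : k ≤ N
            · rw [if_pos h]
            · rw [if_neg h]
              have : N+1-k = 0 := by omega
              rw [this]
              simp
          have hIccN : ∑ k ∈ Finset.Icc 1 (N+1),
              (if k ≤ N then 2*Real.cos ((k:ℝ)*t) * ∑ l ∈ Finset.range (N+1-k), s l * s (l+k) else 0)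
              = ∑ k ∈ Finset.Icc 1 N, 2*Real.cos ((k:ℝ)*t) * ∑ l ∈ Finset.range (N+1-k), s l * s (l+k) := by
            rw [← Finset.sum_filter]
            congr 1
            ext k
            simp only [Finset.mem_filter, Finset.mem_Icc]
            omega
          -- cross term
          have hcross : ∑ k ∈ Finset.Icc 1 (N+1), 2*Real.cos ((k:ℝ)*t) * (s (N+1-k) * s (N+1))
              = 2 * ∑ j ∈ Finset.range (N+1), s j * s (N+1) * Real.cos ((((N:ℝ)+1)-(j:ℝ))*t) := by
            rw [icc_to_range]
            rw [← Finset.sum_range_reflect (fun j => s j * s (N+1) * Real.cos ((((N:ℝ)+1)-(j:ℝ))*t)) (N+1)]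
            rw [Finset.mul_sum]
            refine Finset.sum_congr rfl (fun i hi => ?_)
            simp only [Finset.mem_range] at hi
            have h1 : N+1-1-i = N-i := by omega
            have h2 : N+1-(1+i) = N-i := by omega
            rw [h1, h2]
            have h3 : ((N:ℝ)+1) - ((N-i : ℕ):ℝ) = ((1+i : ℕ):ℝ) := by
              push_cast [Nat.cast_sub (by omega : i ≤ N)]
              ring
            rw [h3]
            ring
          have e1 : ∑ j ∈ Finset.range (N+2), (s j)^2
              = (∑ j ∈ Finset.range (N+1), (s j)^2) + (s (N+1))^2 :=
            Finset.sum_range_succ _ _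
          have e2 : ∑ k ∈ Finset.Icc 1 (N+1), 2*Real.cos ((k:ℝ)*t) * ∑ l ∈ Finset.range (N+2-k), s l * s (l+k)
              = (∑ k ∈ Finset.Icc 1 N, 2*Real.cos ((k:ℝ)*t) * ∑ l ∈ Finset.range (N+1-k), s l * s (l+k))
                + 2 * ∑ j ∈ Finset.range (N+1), s j * s (N+1) * Real.cos ((((N:ℝ)+1)-(j:ℝ))*t) := by
            rw [Finset.sum_congr rfl hsplit, Finset.sum_add_distrib,
              Finset.sum_congr rfl hlast, hIccN, hcross]
          rw [e1, e2]
          ring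

lemma kernel_nonneg (n : ℕ) (ρ : ℕ → ℝ)
    (hρ : ∀ k : ℕ, ρ k =
      (((n : ℝ) - k + 2) * Real.cos (k * Real.pi / (n + 2)) +
        Real.sin (k * Real.pi / (n + 2)) * Real.cot (Real.pi / (n + 2))) / (n + 2)) (t : ℝ) :
    0 ≤ 1 + 2 * ∑ k ∈ Finset.Icc 1 n, ρ k * Real.cos ((k:ℝ)*t) := by
  have hα : Real.pi/((n:ℝ)+2) = Real.pi/((n:ℝ)+2) := rfl
  set α : ℝ := Real.pi/((n:ℝ)+2) with hαdef
  set s : ℕ → ℝ := fun j => Real.sin (((j:ℝ)+1)*α) with hsdef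
  have hnpos : (0:ℝ) < (n:ℝ)+2 := by positivity
  have hρ' : ∀ k : ℕ, ((n:ℝ)+2) * ρ k
      = ((n:ℝ)-k+2)*Real.cos ((k:ℝ)*α) + Real.sin ((k:ℝ)*α)*(Real.cos α/Real.sin α) := by
    intro k
    rw [hρ k, Real.cot_eq_cos_div_sin]
    rw [show (k:ℝ) * Real.pi / ((n:ℝ)+2) = (k:ℝ)*α by rw [hαdef]; ring]
    field_simp
  have hc : ∀ k : ℕ, k ≤ n → ∑ l ∈ Finset.range (n+1-k), s l * s (l+k)
      = (((n:ℝ)-k+2)*Real.cos ((k:ℝ)*α) + Real.sin ((k:ℝ)*α)*(Real.cos α/Real.sin α))/2 := by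
    intro k hk
    have := coeff_id n k hk α hαdef
    rw [← this]
    refine Finset.sum_congr rfl (fun l _ => ?_)
    simp only [hsdef]
    push_cast
    ring_nf
  have h1 : ∑ j ∈ Finset.range (n+1), (s j)^2 = ((n:ℝ)+2)/2 := by
    have h0 := hc 0 (Nat.zero_le n)
    simp only [Nat.add_zero, Nat.sub_zero, Nat.cast_zero, zero_mul, Real.cos_zero,
      Real.sin_zero, zero_mul, mul_one, zero_div, sub_zero, add_zero] at h0
    rw [← h0]
    refine Finset.sum_congr rfl (fun j _ => ?_)
    ring
  have hb := band s t n
  have hsq : (∑ j ∈ Finset.range (n+1), s j * Real.cos ((j:ℝ)*t))^2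
      + (∑ j ∈ Finset.range (n+1), s j * Real.sin ((j:ℝ)*t))^2
      = ∑ j ∈ Finset.range (n+1), ∑ l ∈ Finset.range (n+1),
          s j * s l * Real.cos (((j:ℝ)-(l:ℝ))*t) := by
    rw [sq, sq, Finset.sum_mul_sum, Finset.sum_mul_sum, ← Finset.sum_add_distrib]
    refine Finset.sum_congr rfl (fun j _ => ?_)
    rw [← Finset.sum_add_distrib]
    refine Finset.sum_congr rfl (fun l _ => ?_)
    rw [show ((j:ℝ)-(l:ℝ))*t = (j:ℝ)*t - (l:ℝ)*t by ring, Real.cos_sub]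
    ring
  have final : (((n:ℝ)+2)/2) * (1 + 2 * ∑ k ∈ Finset.Icc 1 n, ρ k * Real.cos ((k:ℝ)*t))
      = (∑ j ∈ Finset.range (n+1), s j * Real.cos ((j:ℝ)*t))^2
        + (∑ j ∈ Finset.range (n+1), s j * Real.sin ((j:ℝ)*t))^2 := by
    rw [hsq, hb, h1]
    have h2 : ∀ k ∈ Finset.Icc 1 n,
        2*Real.cos ((k:ℝ)*t) * ∑ l ∈ Finset.range (n+1-k), s l * s (l+k)
        = ((n:ℝ)+2) * (ρ k * Real.cos ((k:ℝ)*t)) := by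
      intro k hk
      simp only [Finset.mem_Icc] at hk
      rw [hc k hk.2, ← hρ' k]
      ring
    rw [Finset.sum_congr rfl h2, ← Finset.mul_sum]
    ring
  nlinarith [sq_nonneg (∑ j ∈ Finset.range (n+1), s j * Real.cos ((j:ℝ)*t)),
    sq_nonneg (∑ j ∈ Finset.range (n+1), s j * Real.sin ((j:ℝ)*t)), hnpos]

lemma int_cos_zero (r : ℝ) (hr : r ≠ 0) (hs : Real.sin (r * Real.pi) = 0) :
    ∫ φ in (0:ℝ)..Real.pi, Real.cos (r*φ) = 0 := by
  have h := intervalIntegral.integral_comp_mul_left (fun x => Real.cos x) hr (a := 0) (b := Real.pi)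
  simp only [mul_zero, integral_cos] at h
  rw [h, hs, Real.sin_zero]
  simp

lemma orthog (k l : ℕ) (hk : 1 ≤ k) :
    ∫ φ in (0:ℝ)..Real.pi, Real.cos ((k:ℝ)*φ) * Real.cos ((l:ℝ)*φ)
      = if k = l then Real.pi/2 else 0 := by
  have hpt : ∀ φ : ℝ, Real.cos ((k:ℝ)*φ) * Real.cos ((l:ℝ)*φ)
      = (Real.cos (((k:ℝ)+l)*φ) + Real.cos (((k:ℝ)-l)*φ))/2 := by
    intro φ
    rw [show ((k:ℝ)+l)*φ = (k:ℝ)*φ + (l:ℝ)*φ by ring,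
      show ((k:ℝ)-l)*φ = (k:ℝ)*φ - (l:ℝ)*φ by ring, Real.cos_add, Real.cos_sub]
    ring
  simp only [hpt]
  have hi1 : IntervalIntegrable (fun φ => Real.cos (((k:ℝ)+l)*φ)) MeasureTheory.volume 0 Real.pi :=
    (Real.continuous_cos.comp (continuous_const.mul continuous_id)).intervalIntegrable _ _
  have hi2 : IntervalIntegrable (fun φ => Real.cos (((k:ℝ)-l)*φ)) MeasureTheory.volume 0 Real.pi :=
    (Real.continuous_cos.comp (continuous_const.mul continuous_id)).intervalIntegrable _ _
  rw [intervalIntegral.integral_div, intervalIntegral.integral_add hi1 hi2]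
  have h1 : ∫ φ in (0:ℝ)..Real.pi, Real.cos (((k:ℝ)+l)*φ) = 0 := by
    apply int_cos_zero _ (by positivity)
    rw [show ((k:ℝ)+l)*Real.pi = ((k+l:ℕ):ℝ)*Real.pi by push_cast; ring]
    exact Real.sin_nat_mul_pi _
  rw [h1]
  by_cases h : k = l
  · subst h
    simp only [sub_self, zero_mul, Real.cos_zero]
    simp
  · have h2 : ∫ φ in (0:ℝ)..Real.pi, Real.cos (((k:ℝ)-l)*φ) = 0 := by
      apply int_cos_zero
      · intro hc
        apply h
        have : (k:ℝ) = l := by linarith [sub_eq_zero.mp hc]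
        exact_mod_cast this
      · rw [show ((k:ℝ)-l)*Real.pi = ((k-l:ℤ):ℝ)*Real.pi by push_cast; ring]
        exact Real.sin_int_mul_pi _
    rw [h2, if_neg h]
    simp

lemma cos_image_Ioo : Real.cos '' Set.Ioo 0 Real.pi = Set.Ioo (-1 : ℝ) 1 := by
  apply Set.Subset.antisymm
  · have h := Real.strictAntiOn_cos.image_Ioo_subset (a := 0) (b := Real.pi)
    simpa [Real.cos_pi, Real.cos_zero] using h
  · have h := intermediate_value_Ioo' (le_of_lt Real.pi_pos)
      (Real.continuous_cos.continuousOn (s := Set.Icc 0 Real.pi))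
    simpa [Real.cos_pi, Real.cos_zero] using h

lemma cheb_subst (F : ℝ → ℝ) :
    ∫ x in (-1:ℝ)..1, F x * (Real.pi * Real.sqrt (1 - x^2))⁻¹
      = (1/Real.pi) * ∫ θ in (0:ℝ)..Real.pi, F (Real.cos θ) := by
  have key := MeasureTheory.integral_image_eq_integral_abs_deriv_smul
    (s := Set.Ioo 0 Real.pi) (f := Real.cos) (f' := fun θ => -Real.sin θ)
    measurableSet_Ioo
    (fun θ _ => (Real.hasDerivAt_cos θ).hasDerivWithinAt)
    (Real.injOn_cos.mono Set.Ioo_subset_Icc_self)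
    (fun x => F x * (Real.pi * Real.sqrt (1 - x^2))⁻¹)
  rw [cos_image_Ioo] at key
  have hL : ∫ x in Set.Ioo (-1:ℝ) 1, F x * (Real.pi * Real.sqrt (1 - x^2))⁻¹
      = ∫ x in (-1:ℝ)..1, F x * (Real.pi * Real.sqrt (1 - x^2))⁻¹ := by
    rw [intervalIntegral.integral_of_le (by norm_num : (-1:ℝ) ≤ 1),
      MeasureTheory.integral_Ioc_eq_integral_Ioo]
  have hR : ∫ θ in Set.Ioo (0:ℝ) Real.pi,
        |(-Real.sin θ)| • (F (Real.cos θ) * (Real.pi * Real.sqrt (1 - Real.cos θ^2))⁻¹)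
      = ∫ θ in Set.Ioo (0:ℝ) Real.pi, (1/Real.pi) * F (Real.cos θ) := by
    apply MeasureTheory.setIntegral_congr_fun measurableSet_Ioo
    intro θ hθ
    simp only [Set.mem_Ioo] at hθ
    have hsin : 0 < Real.sin θ := Real.sin_pos_of_pos_of_lt_pi hθ.1 hθ.2
    have hsq : Real.sqrt (1 - Real.cos θ^2) = Real.sin θ := by
      rw [show 1 - Real.cos θ^2 = Real.sin θ^2 by nlinarith [Real.sin_sq_add_cos_sq θ]]
      exact Real.sqrt_sq hsin.le
    simp only []
    rw [abs_neg, abs_of_pos hsin, hsq, smul_eq_mul]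
    have hπ : Real.pi ≠ 0 := Real.pi_ne_zero
    field_simp
  rw [← hL, key, hR, MeasureTheory.integral_const_mul,
    ← MeasureTheory.integral_Ioc_eq_integral_Ioo,
    ← intervalIntegral.integral_of_le Real.pi_pos.le]

lemma cos_mul_cont (c : ℝ) : Continuous (fun φ : ℝ => Real.cos (c*φ)) :=
  Real.continuous_cos.comp (continuous_const.mul continuous_id)

lemma E_cont (n : ℕ) (ρ : ℕ → ℝ) (θ : ℝ) :
    Continuous (fun φ : ℝ => 1 + 2*∑ k ∈ Finset.Icc 1 n, ρ k * (Real.cos ((k:ℝ)*θ)*Real.cos ((k:ℝ)*φ))) := by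
  apply continuous_const.add
  apply continuous_const.mul
  apply continuous_finset_sum
  intro k _
  exact continuous_const.mul (continuous_const.mul (cos_mul_cont _))

lemma EIntL (n : ℕ) (ρ : ℕ → ℝ) (θ : ℝ) (l : ℕ) (hl : 1 ≤ l) :
    ∫ φ in (0:ℝ)..Real.pi,
        (1 + 2*∑ k ∈ Finset.Icc 1 n, ρ k * (Real.cos ((k:ℝ)*θ)*Real.cos ((k:ℝ)*φ))) * Real.cos ((l:ℝ)*φ)
      = if l ∈ Finset.Icc 1 n then ρ l * Real.cos ((l:ℝ)*θ) * Real.pi else 0 := by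
  have hpt : ∀ φ : ℝ,
      (1 + 2*∑ k ∈ Finset.Icc 1 n, ρ k * (Real.cos ((k:ℝ)*θ)*Real.cos ((k:ℝ)*φ))) * Real.cos ((l:ℝ)*φ)
      = Real.cos ((l:ℝ)*φ) + ∑ k ∈ Finset.Icc 1 n,
          (2 * ρ k * Real.cos ((k:ℝ)*θ)) * (Real.cos ((k:ℝ)*φ) * Real.cos ((l:ℝ)*φ)) := by
    intro φ
    rw [add_mul, one_mul, Finset.mul_sum, Finset.sum_mul]
    congr 1
    exact Finset.sum_congr rfl (fun k _ => by ring)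
  rw [intervalIntegral.integral_congr (g := fun φ => Real.cos ((l:ℝ)*φ) + ∑ k ∈ Finset.Icc 1 n,
      (2 * ρ k * Real.cos ((k:ℝ)*θ)) * (Real.cos ((k:ℝ)*φ) * Real.cos ((l:ℝ)*φ)))
    (fun φ _ => hpt φ)]
  rw [intervalIntegral.integral_add ((cos_mul_cont _).intervalIntegrable _ _)
    (by
      apply Continuous.intervalIntegrable
      apply continuous_finset_sum
      intro k _
      exact continuous_const.mul ((cos_mul_cont _).mul (cos_mul_cont _)))]
  rw [intervalIntegral.integral_finset_sum (f := fun k φ => (2 * ρ k * Real.cos ((k:ℝ)*θ)) * (Real.cos ((k:ℝ)*φ) * Real.cos ((l:ℝ)*φ))) (fun k _ =>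
    (continuous_const.mul ((cos_mul_cont _).mul (cos_mul_cont _))).intervalIntegrable _ _)]
  have h1 : ∫ φ in (0:ℝ)..Real.pi, Real.cos ((l:ℝ)*φ) = 0 := by
    apply int_cos_zero _ (by positivity)
    exact_mod_cast Real.sin_nat_mul_pi l
  rw [h1, zero_add]
  have h2 : ∀ k ∈ Finset.Icc 1 n,
      ∫ φ in (0:ℝ)..Real.pi, (2 * ρ k * Real.cos ((k:ℝ)*θ)) * (Real.cos ((k:ℝ)*φ) * Real.cos ((l:ℝ)*φ))
      = (2 * ρ k * Real.cos ((k:ℝ)*θ)) * (if k = l then Real.pi/2 else 0) := by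
    intro k hk
    simp only [Finset.mem_Icc] at hk
    rw [intervalIntegral.integral_const_mul, orthog k l hk.1]
  rw [Finset.sum_congr rfl h2]
  have h3 : ∀ k ∈ Finset.Icc 1 n,
      (2 * ρ k * Real.cos ((k:ℝ)*θ) * if k = l then Real.pi/2 else 0)
      = (if k = l then 2 * ρ k * Real.cos ((k:ℝ)*θ) * (Real.pi/2) else 0) := by
    intro k _
    by_cases h : k = l <;> simp [h]
  rw [Finset.sum_congr rfl h3,
    Finset.sum_ite_eq' (Finset.Icc 1 n) l (fun k => 2 * ρ k * Real.cos ((k:ℝ)*θ) * (Real.pi/2))]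
  by_cases h : l ∈ Finset.Icc 1 n <;> simp [h] <;> ring

lemma EInt0 (n : ℕ) (ρ : ℕ → ℝ) (θ : ℝ) :
    ∫ φ in (0:ℝ)..Real.pi,
        (1 + 2*∑ k ∈ Finset.Icc 1 n, ρ k * (Real.cos ((k:ℝ)*θ)*Real.cos ((k:ℝ)*φ)))
      = Real.pi := by
  have hpt : ∀ φ : ℝ,
      (1 + 2*∑ k ∈ Finset.Icc 1 n, ρ k * (Real.cos ((k:ℝ)*θ)*Real.cos ((k:ℝ)*φ)))
      = 1 + ∑ k ∈ Finset.Icc 1 n, (2 * ρ k * Real.cos ((k:ℝ)*θ)) * Real.cos ((k:ℝ)*φ) := by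
    intro φ
    rw [Finset.mul_sum]
    congr 1
    exact Finset.sum_congr rfl (fun k _ => by ring)
  rw [intervalIntegral.integral_congr (g := fun φ =>
      1 + ∑ k ∈ Finset.Icc 1 n, (2 * ρ k * Real.cos ((k:ℝ)*θ)) * Real.cos ((k:ℝ)*φ))
    (fun φ _ => hpt φ)]
  rw [intervalIntegral.integral_add (intervalIntegrable_const)
    (by
      apply Continuous.intervalIntegrable
      apply continuous_finset_sum
      intro k _
      exact continuous_const.mul (cos_mul_cont _))]
  rw [intervalIntegral.integral_finset_sum (f := fun k φ => (2 * ρ k * Real.cos ((k:ℝ)*θ)) * Real.cos ((k:ℝ)*φ)) (fun k _ =>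
    (continuous_const.mul (cos_mul_cont _)).intervalIntegrable _ _)]
  have h2 : ∀ k ∈ Finset.Icc 1 n,
      ∫ φ in (0:ℝ)..Real.pi, (2 * ρ k * Real.cos ((k:ℝ)*θ)) * Real.cos ((k:ℝ)*φ) = 0 := by
    intro k hk
    simp only [Finset.mem_Icc] at hk
    rw [intervalIntegral.integral_const_mul]
    have : ∫ φ in (0:ℝ)..Real.pi, Real.cos ((k:ℝ)*φ) = 0 := by
      have hk0 : (k:ℝ) ≠ 0 := by
        have : 0 < k := hk.1
        positivity
      apply int_cos_zero _ hk0
      exact_mod_cast Real.sin_nat_mul_pi k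
    rw [this, mul_zero]
  rw [Finset.sum_congr rfl h2]
  simp

section Rho
variable (n : ℕ) (ρ : ℕ → ℝ)
  (hρ : ∀ k : ℕ, ρ k =
      (((n : ℝ) - k + 2) * Real.cos (k * Real.pi / (n + 2)) +
        Real.sin (k * Real.pi / (n + 2)) * Real.cot (Real.pi / (n + 2))) / (n + 2))

lemma alpha_pos : 0 < Real.pi/((n:ℝ)+2) := by positivity

lemma alpha_lt : Real.pi/((n:ℝ)+2) < Real.pi := by
  rw [div_lt_iff₀ (by positivity)]
  nlinarith [Real.pi_pos]

lemma sin_alpha_ne : Real.sin (Real.pi/((n:ℝ)+2)) ≠ 0 :=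
  ne_of_gt (Real.sin_pos_of_pos_of_lt_pi (alpha_pos n) (alpha_lt n))

include hρ in
lemma rho_zero : ρ 0 = 1 := by
  rw [hρ 0]
  have h : ((n:ℝ)+2) ≠ 0 := by positivity
  simp [h]

include hρ in
lemma rho_one : ρ 1 = Real.cos (Real.pi/((n:ℝ)+2)) := by
  have hs := sin_alpha_ne n
  rw [hρ 1, Real.cot_eq_cos_div_sin]
  push_cast
  rw [one_mul]
  field_simp
  ring

include hρ in
lemma rho_two : ρ 2 = (2*((n:ℝ)+1)*Real.cos (Real.pi/((n:ℝ)+2))^2 - (n:ℝ))/((n:ℝ)+2) := by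
  have hs := sin_alpha_ne n
  set α := Real.pi/((n:ℝ)+2) with hα
  have h2α : (2:ℝ) * Real.pi / ((n:ℝ)+2) = 2*α := by rw [hα]; ring
  rw [hρ 2, Real.cot_eq_cos_div_sin]
  push_cast
  rw [h2α, Real.cos_two_mul, Real.sin_two_mul]
  field_simp
  ring

lemma cos_alpha_ge (hn : 1 ≤ n) : 1/2 ≤ Real.cos (Real.pi/((n:ℝ)+2)) := by
  have h3 : Real.pi/((n:ℝ)+2) ≤ Real.pi/3 := by
    apply div_le_div_of_nonneg_left Real.pi_pos.le (by norm_num)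
    have : (1:ℝ) ≤ (n:ℝ) := by exact_mod_cast hn
    linarith
  have h := Real.cos_le_cos_of_nonneg_of_le_pi (alpha_pos n).le
    (by linarith [Real.pi_pos]) h3
  rwa [Real.cos_pi_div_three] at h

end Rho

lemma quad_le (n : ℕ) (hn : 1 ≤ n) :
    1 - 2*Real.cos (Real.pi/((n:ℝ)+2))
      + (2*((n:ℝ)+1)*Real.cos (Real.pi/((n:ℝ)+2))^2 - (n:ℝ))/((n:ℝ)+2) ≤ 0 := by
  set c := Real.cos (Real.pi/((n:ℝ)+2)) with hc
  have hge := cos_alpha_ge n hn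
  have hle : c ≤ 1 := Real.cos_le_one _
  have hn1 : (1:ℝ) ≤ (n:ℝ) := by exact_mod_cast hn
  have hpos : (0:ℝ) < (n:ℝ)+2 := by linarith
  have key : 1 - 2*c + (2*((n:ℝ)+1)*c^2 - (n:ℝ))/((n:ℝ)+2)
      = 2*(1-c)*(1-((n:ℝ)+1)*c)/((n:ℝ)+2) := by
    field_simp
    ring
  rw [key]
  apply div_nonpos_of_nonpos_of_nonneg _ hpos.le
  have h1 : 0 ≤ 1 - c := by linarith
  have h2 : 1 ≤ ((n:ℝ)+1)*c := by nlinarith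
  nlinarith

lemma tail_le (n : ℕ) (hn : 1 ≤ n) :
    (1 - (2*((n:ℝ)+1)*Real.cos (Real.pi/((n:ℝ)+2))^2 - (n:ℝ))/((n:ℝ)+2))/2
      ≤ Real.pi^2/((n:ℝ)+2)^2 := by
  set α := Real.pi/((n:ℝ)+2) with hα
  set c := Real.cos α with hc
  have hα0 : 0 < α := alpha_pos n
  have hsinsq : Real.sin α ^ 2 = 1 - c^2 := Real.sin_sq α
  have hsle : Real.sin α ≤ α := Real.sin_le hα0.le
  have hs0 : 0 ≤ Real.sin α := Real.sin_nonneg_of_nonneg_of_le_pi hα0.le (alpha_lt n).le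
  have hcsq : 1 - c^2 ≤ α^2 := by nlinarith
  have hc1 : c ≤ 1 := Real.cos_le_one _
  have hn1 : (1:ℝ) ≤ (n:ℝ) := by exact_mod_cast hn
  have hpos : (0:ℝ) < (n:ℝ)+2 := by linarith
  have hα2 : α^2 = Real.pi^2/((n:ℝ)+2)^2 := by rw [hα, div_pow]
  have e : (1 - (2*((n:ℝ)+1)*c^2 - (n:ℝ))/((n:ℝ)+2))/2 = ((n:ℝ)+1)*(1-c^2)/((n:ℝ)+2) := by
    field_simp
    ring
  rw [e, ← hα2, div_le_iff₀ hpos]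
  nlinarith [sq_nonneg α]

lemma M_bound (n : ℕ) (x r2 : ℝ)
    (h1 : x^2 * (1 - 2*Real.cos (Real.pi/((n:ℝ)+2)) + r2) ≤ 0)
    (h2 : (1-r2)/2 ≤ Real.pi^2/((n:ℝ)+2)^2) :
    x^2*(1 - 2*Real.cos (Real.pi/((n:ℝ)+2)) + r2) + (1-r2)/2
      ≤ Real.pi^2/((n:ℝ)+2)^2 := by
  linarith

set_option maxHeartbeats 1000000 in
lemma cont_main (f : ℝ → ℝ) (hlip : LipschitzOnWith 1 f (Set.Icc (-1) 1))
    (n : ℕ) (hn : 1 ≤ n) (ρ : ℕ → ℝ)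
    (hρ : ∀ k : ℕ, ρ k =
      (((n : ℝ) - k + 2) * Real.cos (k * Real.pi / (n + 2)) +
        Real.sin (k * Real.pi / (n + 2)) * Real.cot (Real.pi / (n + 2))) / (n + 2))
    (aA : ℕ → ℝ)
    (haA : ∀ k : ℕ, aA k = 2 * ∫ x in (-1 : ℝ)..1,
      f x * (Polynomial.Chebyshev.T ℝ (k : ℤ)).eval x *
        (Real.pi * Real.sqrt (1 - x ^ 2))⁻¹)
    (qA : ℝ → ℝ)
    (hqA : ∀ x, qA x = aA 0 / 2 + ∑ k ∈ Finset.Icc 1 n,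
      ρ k * aA k * (Polynomial.Chebyshev.T ℝ (k : ℤ)).eval x)
    (x : ℝ) (hx : x ∈ Set.Icc (-1:ℝ) 1)
    (hEpos : ∀ a b : ℝ, 0 ≤ 1 + 2*∑ k ∈ Finset.Icc 1 n, ρ k * (Real.cos ((k:ℝ)*a)*Real.cos ((k:ℝ)*b))) :
    |f x - qA x| ≤ Real.pi^2/2 * ((n:ℝ)+2)⁻¹ := by
  have hπ : (0:ℝ) < Real.pi := Real.pi_pos
  set θ := Real.arccos x with hθdef
  have hcx : Real.cos θ = x := Real.cos_arccos hx.1 hx.2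
  set g : ℝ → ℝ := fun φ => f (Real.cos φ) with hgdef
  have hgc : Continuous g := by
    apply hlip.continuousOn.comp_continuous Real.continuous_cos
    intro φ
    exact ⟨Real.neg_one_le_cos φ, Real.cos_le_one φ⟩
  set E : ℝ → ℝ := fun φ => 1 + 2*∑ k ∈ Finset.Icc 1 n,
    ρ k * (Real.cos ((k:ℝ)*θ)*Real.cos ((k:ℝ)*φ)) with hEdef
  have hEc : Continuous E := E_cont n ρ θ
  have hE0 : ∀ φ, 0 ≤ E φ := fun φ => hEpos θ φ
  -- Step A
  have haA' : ∀ k : ℕ, aA k = 2/Real.pi * ∫ φ in (0:ℝ)..Real.pi, g φ * Real.cos ((k:ℝ)*φ) := by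
    intro k
    rw [haA k]
    rw [cheb_subst (fun y => f y * (Polynomial.Chebyshev.T ℝ (k:ℤ)).eval y)]
    rw [intervalIntegral.integral_congr
      (g := fun φ => g φ * Real.cos ((k:ℝ)*φ)) (by
        intro φ _
        simp only [Polynomial.Chebyshev.T_real_cos]
        push_cast
        rfl)]
    ring
  -- Step B
  have hq : qA x = 1/Real.pi * ∫ φ in (0:ℝ)..Real.pi, E φ * g φ := by
    have hpt : ∀ φ : ℝ, E φ * g φ
        = g φ + ∑ k ∈ Finset.Icc 1 n,
            (2 * ρ k * Real.cos ((k:ℝ)*θ)) * (g φ * Real.cos ((k:ℝ)*φ)) := by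
      intro φ
      simp only [hEdef]
      rw [add_mul, one_mul, Finset.mul_sum, Finset.sum_mul]
      congr 1
      exact Finset.sum_congr rfl (fun k _ => by ring)
    rw [intervalIntegral.integral_congr (g := fun φ => g φ + ∑ k ∈ Finset.Icc 1 n,
        (2 * ρ k * Real.cos ((k:ℝ)*θ)) * (g φ * Real.cos ((k:ℝ)*φ))) (fun φ _ => hpt φ)]
    rw [intervalIntegral.integral_add (hgc.intervalIntegrable _ _) (by
      apply Continuous.intervalIntegrable
      apply continuous_finset_sum
      intro k _
      exact continuous_const.mul (hgc.mul (cos_mul_cont _)))]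
    rw [intervalIntegral.integral_finset_sum (f := fun k φ => (2 * ρ k * Real.cos ((k:ℝ)*θ)) * (g φ * Real.cos ((k:ℝ)*φ))) (fun k _ =>
      (continuous_const.mul (hgc.mul (cos_mul_cont _))).intervalIntegrable _ _)]
    rw [hqA x]
    have h0 : aA 0 / 2 = 1/Real.pi * ∫ φ in (0:ℝ)..Real.pi, g φ := by
      rw [haA' 0]
      rw [intervalIntegral.integral_congr (g := fun φ => g φ) (by
        intro φ _
        norm_num)]
      ring
    have hterm : ∀ k ∈ Finset.Icc 1 n,
        ρ k * aA k * (Polynomial.Chebyshev.T ℝ (k:ℤ)).eval x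
        = 1/Real.pi * ∫ φ in (0:ℝ)..Real.pi,
            (2 * ρ k * Real.cos ((k:ℝ)*θ)) * (g φ * Real.cos ((k:ℝ)*φ)) := by
      intro k _
      rw [intervalIntegral.integral_const_mul, haA' k, ← hcx]
      have : (Polynomial.Chebyshev.T ℝ (k:ℤ)).eval (Real.cos θ) = Real.cos ((k:ℝ)*θ) := by
        rw [Polynomial.Chebyshev.T_real_cos]
        push_cast
        rfl
      rw [this]
      field_simp
    rw [Finset.sum_congr rfl hterm, h0, mul_add, ← Finset.mul_sum]
  -- normalization
  have hEint : ∫ φ in (0:ℝ)..Real.pi, E φ = Real.pi := EInt0 n ρ θ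
  -- moment value
  set r2 : ℝ := if 2 ≤ n then ρ 2 else 0 with hr2def
  have hM : 1/Real.pi * ∫ φ in (0:ℝ)..Real.pi, E φ * (x - Real.cos φ)^2
      = x^2*(1 - 2*(ρ 1) + r2) + (1-r2)/2 := by
    have hpt : ∀ φ : ℝ, E φ * (x - Real.cos φ)^2
        = (x^2 + 1/2) * E φ + (-2*x) * (E φ * Real.cos ((1:ℕ)*φ)) + (1/2) * (E φ * Real.cos ((2:ℕ)*φ)) := by
      intro φ
      have hcsq : Real.cos φ ^ 2 = 1/2 + Real.cos (2*φ)/2 := Real.cos_sq φ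
      push_cast
      rw [one_mul]
      linear_combination (E φ) * hcsq
    rw [intervalIntegral.integral_congr (g := fun φ =>
      (x^2 + 1/2) * E φ + (-2*x) * (E φ * Real.cos ((1:ℕ)*φ)) + (1/2) * (E φ * Real.cos ((2:ℕ)*φ)))
      (fun φ _ => hpt φ)]
    have i1 : IntervalIntegrable (fun φ => (x^2+1/2) * E φ) MeasureTheory.volume 0 Real.pi :=
      (continuous_const.mul hEc).intervalIntegrable _ _
    have i2 : IntervalIntegrable (fun φ => (-2*x) * (E φ * Real.cos (((1:ℕ):ℝ)*φ))) MeasureTheory.volume 0 Real.pi :=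
      (continuous_const.mul (hEc.mul (cos_mul_cont _))).intervalIntegrable _ _
    have i3 : IntervalIntegrable (fun φ => (1/2) * (E φ * Real.cos (((2:ℕ):ℝ)*φ))) MeasureTheory.volume 0 Real.pi :=
      (continuous_const.mul (hEc.mul (cos_mul_cont _))).intervalIntegrable _ _
    rw [intervalIntegral.integral_add (i1.add i2) i3, intervalIntegral.integral_add i1 i2]
    rw [intervalIntegral.integral_const_mul, intervalIntegral.integral_const_mul,
      intervalIntegral.integral_const_mul, hEint]
    have e1 : ∫ φ in (0:ℝ)..Real.pi, E φ * Real.cos (((1:ℕ):ℝ)*φ)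
        = ρ 1 * Real.cos (((1:ℕ):ℝ)*θ) * Real.pi := by
      have := EIntL n ρ θ 1 le_rfl
      rw [hEdef]
      rw [this, if_pos (Finset.mem_Icc.mpr ⟨le_rfl, hn⟩)]
    have e2 : ∫ φ in (0:ℝ)..Real.pi, E φ * Real.cos (((2:ℕ):ℝ)*φ)
        = r2 * (2*x^2-1) * Real.pi := by
      have h := EIntL n ρ θ 2 (by norm_num)
      rw [hEdef]
      rw [h]
      have hc2 : Real.cos (((2:ℕ):ℝ)*θ) = 2*x^2-1 := by
        push_cast
        rw [Real.cos_two_mul, hcx]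
      by_cases hcase : 2 ≤ n
      · rw [if_pos (Finset.mem_Icc.mpr ⟨by norm_num, hcase⟩), hr2def, if_pos hcase, hc2]
      · rw [if_neg (by simp [Finset.mem_Icc]; omega), hr2def, if_neg hcase]
        ring
    rw [e1, e2]
    have hc1 : Real.cos (((1:ℕ):ℝ)*θ) = x := by push_cast; rw [one_mul, hcx]
    rw [hc1]
    field_simp
    ring
  -- the difference as an integral
  have hdiff : f x - qA x = 1/Real.pi * ∫ φ in (0:ℝ)..Real.pi, E φ * (g θ - g φ) := by
    have hpt : ∀ φ : ℝ, E φ * (g θ - g φ) = g θ * E φ - E φ * g φ := fun φ => by ring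
    rw [intervalIntegral.integral_congr (g := fun φ => g θ * E φ - E φ * g φ) (fun φ _ => hpt φ)]
    rw [intervalIntegral.integral_sub (f := fun φ => g θ * E φ) (g := fun φ => E φ * g φ) ((continuous_const.mul hEc).intervalIntegrable _ _)
      ((hEc.mul hgc).intervalIntegrable _ _)]
    rw [intervalIntegral.integral_const_mul, hEint, hq]
    have : g θ = f x := by rw [hgdef]; simp only [hcx]
    rw [this]
    field_simp
  -- the bound
  set δ : ℝ := Real.pi/((n:ℝ)+2) with hδdef
  have hδ0 : 0 < δ := alpha_pos n
  have habs : |f x - qA x| ≤ 1/Real.pi * ∫ φ in (0:ℝ)..Real.pi,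
      E φ * (((x - Real.cos φ)^2 + δ^2)/(2*δ)) := by
    rw [hdiff, abs_mul, abs_of_pos (by positivity : (0:ℝ) < 1/Real.pi)]
    apply mul_le_mul_of_nonneg_left _ (by positivity : (0:ℝ) ≤ 1/Real.pi)
    calc |∫ φ in (0:ℝ)..Real.pi, E φ * (g θ - g φ)|
        ≤ ∫ φ in (0:ℝ)..Real.pi, |E φ * (g θ - g φ)| :=
          intervalIntegral.abs_integral_le_integral_abs hπ.le
      _ ≤ ∫ φ in (0:ℝ)..Real.pi, E φ * (((x - Real.cos φ)^2 + δ^2)/(2*δ)) := by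
          apply intervalIntegral.integral_mono_on hπ.le
          · exact ((hEc.mul (continuous_const.sub hgc)).abs).intervalIntegrable _ _
          · apply Continuous.intervalIntegrable
            exact hEc.mul ((((continuous_const.sub Real.continuous_cos).pow 2).add continuous_const).div_const _)
          · intro φ _
            rw [abs_mul, abs_of_nonneg (hE0 φ)]
            apply mul_le_mul_of_nonneg_left _ (hE0 φ)
            have h1 : |g θ - g φ| ≤ |Real.cos θ - Real.cos φ| := by
              have := LipschitzOnWith.dist_le_mul hlip (Real.cos θ)
                ⟨Real.neg_one_le_cos θ, Real.cos_le_one θ⟩ (Real.cos φ)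
                ⟨Real.neg_one_le_cos φ, Real.cos_le_one φ⟩
              simpa [Real.dist_eq] using this
            have h2 : |x - Real.cos φ| ≤ ((x - Real.cos φ)^2 + δ^2)/(2*δ) := by
              rw [le_div_iff₀ (by positivity)]
              nlinarith [sq_nonneg (|x - Real.cos φ| - δ), sq_abs (x - Real.cos φ)]
            rw [hcx] at h1
            exact le_trans h1 h2
  -- compute the RHS integral
  have hsplit : 1/Real.pi * ∫ φ in (0:ℝ)..Real.pi,
      E φ * (((x - Real.cos φ)^2 + δ^2)/(2*δ))
      = ((x^2*(1 - 2*(ρ 1) + r2) + (1-r2)/2) + δ^2)/(2*δ) := by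
    have hpt : ∀ φ : ℝ, E φ * (((x - Real.cos φ)^2 + δ^2)/(2*δ))
        = (1/(2*δ)) * (E φ * (x - Real.cos φ)^2) + (δ^2/(2*δ)) * E φ := fun φ => by
      field_simp
    rw [intervalIntegral.integral_congr (g := fun φ =>
      (1/(2*δ)) * (E φ * (x - Real.cos φ)^2) + (δ^2/(2*δ)) * E φ) (fun φ _ => hpt φ)]
    rw [intervalIntegral.integral_add (f := fun φ => (1/(2*δ)) * (E φ * (x - Real.cos φ)^2)) (g := fun φ => (δ^2/(2*δ)) * E φ)
      ((continuous_const.mul (hEc.mul ((continuous_const.sub Real.continuous_cos).pow 2))).intervalIntegrable _ _)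
      ((continuous_const.mul hEc).intervalIntegrable _ _)]
    rw [intervalIntegral.integral_const_mul, intervalIntegral.integral_const_mul, hEint]
    have := hM
    have hMv : ∫ φ in (0:ℝ)..Real.pi, E φ * (x - Real.cos φ)^2
        = Real.pi * (x^2*(1 - 2*(ρ 1) + r2) + (1-r2)/2) := by
      field_simp at this
      linarith [this]
    rw [hMv]
    field_simp
  -- numeric conclusion
  have hρ1 : ρ 1 = Real.cos (Real.pi/((n:ℝ)+2)) := rho_one n ρ hρ
  have hMle : x^2*(1 - 2*(ρ 1) + r2) + (1-r2)/2 ≤ Real.pi^2/((n:ℝ)+2)^2 := by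
    rw [hρ1]
    apply M_bound
    · by_cases hcase : 2 ≤ n
      · rw [hr2def, if_pos hcase, rho_two n ρ hρ]
        have hq := quad_le n hn
        nlinarith [sq_nonneg x]
      · have hn1 : n = 1 := by omega
        subst hn1
        rw [hr2def, if_neg hcase]
        rw [show Real.pi/(((1:ℕ):ℝ)+2) = Real.pi/3 by norm_num, Real.cos_pi_div_three]
        norm_num
    · by_cases hcase : 2 ≤ n
      · rw [hr2def, if_pos hcase, rho_two n ρ hρ]
        exact tail_le n hn
      · have hn1 : n = 1 := by omega
        subst hn1
        rw [hr2def, if_neg hcase]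
        have h3 : Real.pi > 3 := Real.pi_gt_three
        have he : (((1:ℕ):ℝ)+2)^2 = 9 := by norm_num
        rw [he]
        nlinarith
  have hfinal : ((Real.pi^2/((n:ℝ)+2)^2) + δ^2)/(2*δ) = Real.pi/((n:ℝ)+2) := by
    rw [hδdef]
    have hm : ((n:ℝ)+2) ≠ 0 := by positivity
    field_simp
    ring
  have hchain : |f x - qA x| ≤ Real.pi/((n:ℝ)+2) := by
    rw [← hfinal]
    apply le_trans habs
    rw [hsplit]
    gcongr
  have hlast : Real.pi/((n:ℝ)+2) ≤ Real.pi^2/2 * ((n:ℝ)+2)⁻¹ := by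
    have h3 : Real.pi > 3 := Real.pi_gt_three
    rw [div_eq_mul_inv]
    apply mul_le_mul_of_nonneg_right _ (by positivity)
    nlinarith
  exact le_trans hchain hlast
lemma icc_to_range' {M : Type*} [AddCommMonoid M] (m : ℕ) (f : ℕ → M) :
    ∑ k ∈ Finset.Icc 1 m, f k = ∑ i ∈ Finset.range m, f (1+i) := by
  rw [← Finset.Ico_add_one_right_eq_Icc, Finset.sum_Ico_eq_sum_range]
  simp

noncomputable def psi (n j : ℕ) : ℝ := Real.pi - Real.pi*((j:ℝ)-1/2)/n

lemma disc_S (n : ℕ) (hn : 1 ≤ n) (r : ℕ) (h1 : 1 ≤ r) (h2 : r ≤ 2*n-1) :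
    ∑ j ∈ Finset.Icc 1 n, Real.cos ((r:ℝ) * psi n j) = 0 := by
  have hn0 : ((n:ℝ)) ≠ 0 := by
    have : 0 < n := hn
    positivity
  set a : ℝ := (r:ℝ)*Real.pi - (r:ℝ)*Real.pi/(2*n) with ha
  set d : ℝ := -((r:ℝ)*Real.pi/n) with hd
  have hpt : ∀ i : ℕ, (r:ℝ) * psi n (1+i) = a + i * d := by
    intro i
    unfold psi
    rw [ha, hd]
    push_cast
    field_simp
    ring
  rw [icc_to_range']
  rw [Finset.sum_congr rfl (fun i _ => by rw [hpt i])]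
  have htel := sum_cos_tel a d n
  have harg1 : a + n*d - d/2 = 0 := by rw [ha, hd]; field_simp; ring
  have harg2 : a - d/2 = (r:ℝ)*Real.pi := by rw [ha, hd]; field_simp; ring
  rw [harg1, harg2, Real.sin_zero] at htel
  have hrpi : Real.sin ((r:ℝ)*Real.pi) = 0 := Real.sin_nat_mul_pi r
  rw [hrpi] at htel
  have hd2 : Real.sin (d/2) ≠ 0 := by
    rw [hd]
    have : -((r:ℝ)*Real.pi/n)/2 = -((r:ℝ)*Real.pi/(2*n)) := by ring
    rw [this, Real.sin_neg, neg_ne_zero]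
    apply ne_of_gt
    apply Real.sin_pos_of_pos_of_lt_pi
    · have : (0:ℝ) < (r:ℝ) := by exact_mod_cast h1
      positivity
    · rw [div_lt_iff₀ (by positivity)]
      have hr : (r:ℝ) < 2*n := by
        have : r < 2*n := by omega
        exact_mod_cast this
      nlinarith [Real.pi_pos]
  have := mul_eq_zero.mp (by linarith [htel] :
    2 * Real.sin (d/2) * ∑ j ∈ Finset.range n, Real.cos (a + j * d) = 0)
  rcases this with h | h
  · exfalso
    rcases mul_eq_zero.mp h with h' | h'
    · norm_num at h'
    · exact hd2 h'
  · exact h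

lemma disc_S2n (n : ℕ) (hn : 1 ≤ n) :
    ∑ j ∈ Finset.Icc 1 n, Real.cos (((2*n:ℕ):ℝ) * psi n j) = -(n:ℝ) := by
  have hn0 : ((n:ℝ)) ≠ 0 := by
    have : 0 < n := hn
    positivity
  have hpt : ∀ j : ℕ, Real.cos (((2*n:ℕ):ℝ) * psi n j) = -1 := by
    intro j
    have harg : ((2*n:ℕ):ℝ) * psi n j = Real.pi + ((n:ℤ)-(j:ℤ))*(2*Real.pi) := by
      unfold psi
      push_cast
      field_simp
      ring
    rw [harg]
    rw [show ((((n:ℤ)):ℝ) - ((j:ℤ):ℝ)) = (((n:ℤ) - (j:ℤ) : ℤ):ℝ) by push_cast; ring]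
    rw [Real.cos_add_int_mul_two_pi, Real.cos_pi]
  rw [Finset.sum_congr rfl (fun j _ => hpt j), Finset.sum_const, Nat.card_Icc]
  simp

lemma disc_orth (n : ℕ) (hn : 2 ≤ n) (k l : ℕ) (hk1 : 1 ≤ k) (hkn : k ≤ n) (hl : l ≤ 2) :
    ∑ j ∈ Finset.Icc 1 n, Real.cos ((k:ℝ) * psi n j) * Real.cos ((l:ℝ) * psi n j)
      = (if k = l then (n:ℝ)/2 else 0) - (if k + l = 2*n then (n:ℝ)/2 else 0) := by
  have hpt : ∀ j : ℕ, Real.cos ((k:ℝ) * psi n j) * Real.cos ((l:ℝ) * psi n j)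
      = (Real.cos (((k+l:ℕ):ℝ) * psi n j) + Real.cos (((k:ℝ)-(l:ℝ)) * psi n j))/2 := by
    intro j
    have h1 : Real.cos (((k+l:ℕ):ℝ) * psi n j)
        = Real.cos ((k:ℝ) * psi n j) * Real.cos ((l:ℝ) * psi n j)
          - Real.sin ((k:ℝ) * psi n j) * Real.sin ((l:ℝ) * psi n j) := by
      rw [show ((k+l:ℕ):ℝ) * psi n j = (k:ℝ) * psi n j + (l:ℝ) * psi n j by push_cast; ring]
      exact Real.cos_add _ _
    have h2 : Real.cos (((k:ℝ)-(l:ℝ)) * psi n j)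
        = Real.cos ((k:ℝ) * psi n j) * Real.cos ((l:ℝ) * psi n j)
          + Real.sin ((k:ℝ) * psi n j) * Real.sin ((l:ℝ) * psi n j) := by
      rw [show ((k:ℝ)-(l:ℝ)) * psi n j = (k:ℝ) * psi n j - (l:ℝ) * psi n j by ring]
      exact Real.cos_sub _ _
    linarith
  rw [Finset.sum_congr rfl (fun j _ => hpt j)]
  rw [← Finset.sum_div, Finset.sum_add_distrib]
  have hS1 : ∑ j ∈ Finset.Icc 1 n, Real.cos (((k+l:ℕ):ℝ) * psi n j)
      = if k + l = 2*n then -(n:ℝ) else 0 := by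
    by_cases hc : k + l = 2*n
    · rw [if_pos hc, ← disc_S2n n (by omega), hc]
    · rw [if_neg hc]
      exact disc_S n (by omega) (k+l) (by omega) (by omega)
  have hS2 : ∑ j ∈ Finset.Icc 1 n, Real.cos (((k:ℝ)-(l:ℝ)) * psi n j)
      = if k = l then (n:ℝ) else 0 := by
    by_cases he : k = l
    · rw [if_pos he, he]
      have : ∀ j : ℕ, Real.cos (((l:ℝ)-(l:ℝ)) * psi n j) = 1 := by
        intro j
        rw [show ((l:ℝ)-(l:ℝ)) * psi n j = 0 by ring, Real.cos_zero]
      rw [Finset.sum_congr rfl (fun j _ => this j), Finset.sum_const, Nat.card_Icc]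
      simp
    · rw [if_neg he]
      rcases Nat.lt_or_ge l k with hlt | hge
      · have : ∀ j : ℕ, Real.cos (((k:ℝ)-(l:ℝ)) * psi n j)
            = Real.cos (((k-l:ℕ):ℝ) * psi n j) := by
          intro j
          congr 1
          push_cast [Nat.cast_sub hlt.le]
          ring
        rw [Finset.sum_congr rfl (fun j _ => this j)]
        exact disc_S n (by omega) (k-l) (by omega) (by omega)
      · have hlt : k < l := by omega
        have : ∀ j : ℕ, Real.cos (((k:ℝ)-(l:ℝ)) * psi n j)
            = Real.cos (((l-k:ℕ):ℝ) * psi n j) := by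
          intro j
          rw [show ((k:ℝ)-(l:ℝ)) * psi n j = -(((l:ℝ)-(k:ℝ)) * psi n j) by ring, Real.cos_neg]
          congr 1
          push_cast [Nat.cast_sub hlt.le]
          ring
        rw [Finset.sum_congr rfl (fun j _ => this j)]
        exact disc_S n (by omega) (l-k) (by omega) (by omega)
  rw [hS1, hS2]
  split_ifs <;> ring

lemma Esum0 (n : ℕ) (hn : 1 ≤ n) (ρ : ℕ → ℝ) (θ : ℝ) :
    ∑ j ∈ Finset.Icc 1 n, (1 + 2*∑ k ∈ Finset.Icc 1 n,
        ρ k * (Real.cos ((k:ℝ)*θ)*Real.cos ((k:ℝ)* psi n j))) = (n:ℝ) := by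
  rw [Finset.sum_add_distrib, Finset.sum_const, Nat.card_Icc]
  have h2 : ∑ j ∈ Finset.Icc 1 n, 2*∑ k ∈ Finset.Icc 1 n,
      ρ k * (Real.cos ((k:ℝ)*θ)*Real.cos ((k:ℝ)* psi n j)) = 0 := by
    have hswap : ∑ j ∈ Finset.Icc 1 n, ∑ k ∈ Finset.Icc 1 n,
        ρ k * (Real.cos ((k:ℝ)*θ)*Real.cos ((k:ℝ)* psi n j))
        = ∑ k ∈ Finset.Icc 1 n, (ρ k * Real.cos ((k:ℝ)*θ)) *
            ∑ j ∈ Finset.Icc 1 n, Real.cos ((k:ℝ)* psi n j) := by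
      rw [Finset.sum_comm]
      refine Finset.sum_congr rfl (fun k _ => ?_)
      rw [Finset.mul_sum]
      exact Finset.sum_congr rfl (fun j _ => by ring)
    rw [← Finset.mul_sum, hswap]
    have : ∀ k ∈ Finset.Icc 1 n, (ρ k * Real.cos ((k:ℝ)*θ)) *
        ∑ j ∈ Finset.Icc 1 n, Real.cos ((k:ℝ)* psi n j) = 0 := by
      intro k hk
      simp only [Finset.mem_Icc] at hk
      rw [disc_S n hn k hk.1 (by omega), mul_zero]
    rw [Finset.sum_congr rfl this]
    simp
  rw [h2]
  simp

lemma EsumL (n : ℕ) (hn : 2 ≤ n) (ρ : ℕ → ℝ) (θ : ℝ) (l : ℕ) (hl1 : 1 ≤ l) (hl2 : l ≤ 2) :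
    ∑ j ∈ Finset.Icc 1 n, (1 + 2*∑ k ∈ Finset.Icc 1 n,
        ρ k * (Real.cos ((k:ℝ)*θ)*Real.cos ((k:ℝ)* psi n j))) * Real.cos ((l:ℝ) * psi n j)
      = if l + l = 2*n then 0 else (n:ℝ) * (ρ l * Real.cos ((l:ℝ)*θ)) := by
  have hpt : ∀ j : ℕ, (1 + 2*∑ k ∈ Finset.Icc 1 n,
      ρ k * (Real.cos ((k:ℝ)*θ)*Real.cos ((k:ℝ)* psi n j))) * Real.cos ((l:ℝ) * psi n j)
      = Real.cos ((l:ℝ) * psi n j) + ∑ k ∈ Finset.Icc 1 n,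
          (2 * ρ k * Real.cos ((k:ℝ)*θ)) * (Real.cos ((k:ℝ)* psi n j) * Real.cos ((l:ℝ)* psi n j)) := by
    intro j
    rw [add_mul, one_mul, Finset.mul_sum, Finset.sum_mul]
    congr 1
    exact Finset.sum_congr rfl (fun k _ => by ring)
  rw [Finset.sum_congr rfl (fun j _ => hpt j), Finset.sum_add_distrib]
  have hS : ∑ j ∈ Finset.Icc 1 n, Real.cos ((l:ℝ) * psi n j) = 0 :=
    disc_S n (by omega) l hl1 (by omega)
  rw [hS, zero_add, Finset.sum_comm]
  have hinner : ∀ k ∈ Finset.Icc 1 n,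
      ∑ j ∈ Finset.Icc 1 n, (2 * ρ k * Real.cos ((k:ℝ)*θ)) *
          (Real.cos ((k:ℝ)* psi n j) * Real.cos ((l:ℝ)* psi n j))
      = (if k = l then (2 * ρ k * Real.cos ((k:ℝ)*θ)) * ((n:ℝ)/2) else 0)
        - (if k = 2*n - l then (2 * ρ k * Real.cos ((k:ℝ)*θ)) * ((n:ℝ)/2) else 0) := by
    intro k hk
    simp only [Finset.mem_Icc] at hk
    rw [← Finset.mul_sum, disc_orth n hn k l hk.1 hk.2 hl2]
    have hiff : (k + l = 2*n) ↔ (k = 2*n - l) := by omega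
    simp only [hiff]
    split_ifs <;> ring
  rw [Finset.sum_congr rfl hinner, Finset.sum_sub_distrib,
    Finset.sum_ite_eq' (Finset.Icc 1 n) l, Finset.sum_ite_eq' (Finset.Icc 1 n) (2*n-l)]
  have hlmem : l ∈ Finset.Icc 1 n := Finset.mem_Icc.mpr ⟨hl1, by omega⟩
  rw [if_pos hlmem]
  by_cases hc : l + l = 2*n
  · have he : 2*n - l = l := by omega
    rw [if_pos hc, he, if_pos hlmem]
    ring
  · have hnm : 2*n - l ∉ Finset.Icc 1 n := by
      simp only [Finset.mem_Icc]
      omega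
    rw [if_neg hc, if_neg hnm]
    ring

set_option maxHeartbeats 1000000 in
lemma disc_main (f : ℝ → ℝ) (hlip : LipschitzOnWith 1 f (Set.Icc (-1) 1))
    (n : ℕ) (hn : 1 ≤ n) (ρ : ℕ → ℝ)
    (hρ : ∀ k : ℕ, ρ k =
      (((n : ℝ) - k + 2) * Real.cos (k * Real.pi / (n + 2)) +
        Real.sin (k * Real.pi / (n + 2)) * Real.cot (Real.pi / (n + 2))) / (n + 2))
    (node : ℕ → ℝ)
    (hnode : ∀ j : ℕ, node j = -Real.cos (Real.pi * (j - 1 / 2) / n))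
    (aI : ℕ → ℝ)
    (haI : ∀ k : ℕ, aI k = 2 * (n : ℝ)⁻¹ * ∑ j ∈ Finset.Icc 1 n,
      f (node j) * (Polynomial.Chebyshev.T ℝ (k : ℤ)).eval (node j))
    (qI : ℝ → ℝ)
    (hqI : ∀ x, qI x = aI 0 / 2 + ∑ k ∈ Finset.Icc 1 n,
      ρ k * aI k * (Polynomial.Chebyshev.T ℝ (k : ℤ)).eval x)
    (x : ℝ) (hx : x ∈ Set.Icc (-1:ℝ) 1)
    (hEpos : ∀ a b : ℝ, 0 ≤ 1 + 2*∑ k ∈ Finset.Icc 1 n, ρ k * (Real.cos ((k:ℝ)*a)*Real.cos ((k:ℝ)*b))) :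
    |f x - qI x| ≤ Real.pi^2/2 * ((n:ℝ)+2)⁻¹ := by
  have hπ3 : Real.pi > 3 := Real.pi_gt_three
  -- n = 1 case
  rcases eq_or_lt_of_le hn with hn1 | hn2
  · have hn1' : n = 1 := hn1.symm
    subst hn1'
    have hnode1 : node 1 = 0 := by
      rw [hnode 1]
      push_cast
      rw [show Real.pi * ((1:ℝ) - 1/2) / 1 = Real.pi/2 by ring, Real.cos_pi_div_two]
      norm_num
    have haI0 : aI 0 = 2 * f 0 := by
      rw [haI 0]
      simp [hnode1, Polynomial.Chebyshev.T_zero]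
    have haI1 : aI 1 = 0 := by
      rw [haI 1]
      simp [hnode1, Polynomial.Chebyshev.T_one]
    have hq : qI x = f 0 := by
      rw [hqI x]
      simp [haI0, haI1]
    rw [hq]
    have hd : |f x - f 0| ≤ 1 := by
      have := LipschitzOnWith.dist_le_mul hlip x hx 0 (by norm_num)
      rw [Real.dist_eq, Real.dist_eq] at this
      have hxabs : |x - 0| ≤ 1 := by
        rw [sub_zero, abs_le]
        exact ⟨hx.1, hx.2⟩
      calc |f x - f 0| ≤ 1 * |x - 0| := by exact_mod_cast this
        _ ≤ 1 := by rw [one_mul]; exact hxabs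
    apply le_trans hd
    rw [show ((1:ℕ):ℝ) + 2 = 3 by norm_num]
    nlinarith
  -- n ≥ 2
  have hn2' : 2 ≤ n := hn2
  have hnR : (0:ℝ) < (n:ℝ) := by
    have : 0 < n := hn
    exact_mod_cast this
  set θ := Real.arccos x with hθdef
  have hcx : Real.cos θ = x := Real.cos_arccos hx.1 hx.2
  set g : ℝ → ℝ := fun φ => f (Real.cos φ) with hgdef
  set E : ℕ → ℝ := fun j => 1 + 2*∑ k ∈ Finset.Icc 1 n,
    ρ k * (Real.cos ((k:ℝ)*θ)*Real.cos ((k:ℝ)* psi n j)) with hEdef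
  have hE0 : ∀ j, 0 ≤ E j := fun j => hEpos θ (psi n j)
  have hnode' : ∀ j : ℕ, node j = Real.cos (psi n j) := by
    intro j
    rw [hnode j]
    unfold psi
    rw [Real.cos_pi_sub]
  have hTnode : ∀ (k j : ℕ), (Polynomial.Chebyshev.T ℝ (k:ℤ)).eval (node j)
      = Real.cos ((k:ℝ) * psi n j) := by
    intro k j
    rw [hnode' j, Polynomial.Chebyshev.T_real_cos]
    push_cast
    rfl
  have haI' : ∀ k : ℕ, aI k = 2*(n:ℝ)⁻¹ * ∑ j ∈ Finset.Icc 1 n,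
      g (psi n j) * Real.cos ((k:ℝ) * psi n j) := by
    intro k
    rw [haI k]
    congr 1
    refine Finset.sum_congr rfl (fun j _ => ?_)
    rw [hTnode k j, hnode' j]
  -- expression of qI
  have hq : qI x = (n:ℝ)⁻¹ * ∑ j ∈ Finset.Icc 1 n, E j * g (psi n j) := by
    have hpt : ∀ j : ℕ, E j * g (psi n j)
        = g (psi n j) + ∑ k ∈ Finset.Icc 1 n,
            (2 * ρ k * Real.cos ((k:ℝ)*θ)) * (g (psi n j) * Real.cos ((k:ℝ)* psi n j)) := by
      intro j
      simp only [hEdef]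
      rw [add_mul, one_mul, Finset.mul_sum, Finset.sum_mul]
      congr 1
      exact Finset.sum_congr rfl (fun k _ => by ring)
    rw [Finset.sum_congr rfl (fun j _ => hpt j), Finset.sum_add_distrib, mul_add, Finset.sum_comm]
    rw [hqI x]
    have h0 : aI 0 / 2 = (n:ℝ)⁻¹ * ∑ j ∈ Finset.Icc 1 n, g (psi n j) := by
      rw [haI' 0]
      have : ∀ j ∈ Finset.Icc 1 n, g (psi n j) * Real.cos (((0:ℕ):ℝ) * psi n j) = g (psi n j) := by
        intro j _
        norm_num
      rw [Finset.sum_congr rfl this]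
      ring
    have hterm : ∀ k ∈ Finset.Icc 1 n,
        ρ k * aI k * (Polynomial.Chebyshev.T ℝ (k:ℤ)).eval x
        = (n:ℝ)⁻¹ * ∑ j ∈ Finset.Icc 1 n,
            (2 * ρ k * Real.cos ((k:ℝ)*θ)) * (g (psi n j) * Real.cos ((k:ℝ)* psi n j)) := by
      intro k _
      rw [← Finset.mul_sum, haI' k, ← hcx]
      have : (Polynomial.Chebyshev.T ℝ (k:ℤ)).eval (Real.cos θ) = Real.cos ((k:ℝ)*θ) := by
        rw [Polynomial.Chebyshev.T_real_cos]
        push_cast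
        rfl
      rw [this]
      ring
    rw [Finset.sum_congr rfl hterm, h0, ← Finset.mul_sum]
  -- normalization and moment
  have hnorm : ∑ j ∈ Finset.Icc 1 n, E j = (n:ℝ) := Esum0 n hn ρ θ
  set r2 : ℝ := if 2 + 2 = 2*n then 0 else ρ 2 with hr2def
  set Mv : ℝ := x^2*(1 - 2*(ρ 1) + r2) + (1-r2)/2 with hMvdef
  have hM : ∑ j ∈ Finset.Icc 1 n, E j * (x - Real.cos (psi n j))^2 = (n:ℝ) * Mv := by
    have hpt : ∀ j : ℕ, E j * (x - Real.cos (psi n j))^2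
        = (x^2 + 1/2) * E j + (-2*x) * (E j * Real.cos (((1:ℕ):ℝ) * psi n j))
          + (1/2) * (E j * Real.cos (((2:ℕ):ℝ) * psi n j)) := by
      intro j
      have hcsq : Real.cos (psi n j) ^ 2 = 1/2 + Real.cos (2 * psi n j)/2 := Real.cos_sq _
      push_cast
      rw [one_mul]
      linear_combination (E j) * hcsq
    rw [Finset.sum_congr rfl (fun j _ => hpt j), Finset.sum_add_distrib, Finset.sum_add_distrib,
      ← Finset.mul_sum, ← Finset.mul_sum, ← Finset.mul_sum, hnorm]
    have e1 : ∑ j ∈ Finset.Icc 1 n, E j * Real.cos (((1:ℕ):ℝ) * psi n j)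
        = (n:ℝ) * (ρ 1 * x) := by
      have h := EsumL n hn2' ρ θ 1 le_rfl (by norm_num)
      rw [hEdef]
      rw [h, if_neg (by omega)]
      rw [show Real.cos (((1:ℕ):ℝ)*θ) = x by push_cast; rw [one_mul, hcx]]
    have e2 : ∑ j ∈ Finset.Icc 1 n, E j * Real.cos (((2:ℕ):ℝ) * psi n j)
        = (n:ℝ) * (r2 * (2*x^2-1)) := by
      have h := EsumL n hn2' ρ θ 2 (by norm_num) le_rfl
      rw [hEdef]
      rw [h]
      have hc2 : Real.cos (((2:ℕ):ℝ)*θ) = 2*x^2-1 := by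
        push_cast
        rw [Real.cos_two_mul, hcx]
      by_cases hcase : 2 + 2 = 2*n
      · rw [if_pos hcase, hr2def, if_pos hcase]
        ring
      · rw [if_neg hcase, hr2def, if_neg hcase, hc2]
    rw [e1, e2, hMvdef]
    ring
  -- bound
  set δ : ℝ := Real.pi/((n:ℝ)+2) with hδdef
  have hδ0 : 0 < δ := alpha_pos n
  have hfg : f x = g θ := by rw [hgdef]; simp only [hcx]
  have hdiff : f x - qI x = (n:ℝ)⁻¹ * ∑ j ∈ Finset.Icc 1 n, E j * (g θ - g (psi n j)) := by
    have hsum : ∑ j ∈ Finset.Icc 1 n, E j * (g θ - g (psi n j))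
        = g θ * (n:ℝ) - ∑ j ∈ Finset.Icc 1 n, E j * g (psi n j) := by
      rw [Finset.sum_congr rfl (fun j _ => (by ring :
            E j * (g θ - g (psi n j)) = E j - (E j - E j * (g θ - g (psi n j)))))]
      rw [Finset.sum_sub_distrib, hnorm]
      rw [Finset.sum_congr rfl (fun j _ => (by ring :
            E j - E j * (g θ - g (psi n j)) = E j * (1 - g θ) + E j * g (psi n j)))]
      rw [Finset.sum_add_distrib, ← Finset.sum_mul, hnorm]
      ring
    rw [hq, hsum, hfg]
    field_simp
  have habs : |f x - qI x| ≤ (n:ℝ)⁻¹ * ∑ j ∈ Finset.Icc 1 n,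
      E j * (((x - Real.cos (psi n j))^2 + δ^2)/(2*δ)) := by
    rw [hdiff, abs_mul, abs_of_pos (by positivity : (0:ℝ) < (n:ℝ)⁻¹)]
    apply mul_le_mul_of_nonneg_left _ (by positivity : (0:ℝ) ≤ (n:ℝ)⁻¹)
    calc |∑ j ∈ Finset.Icc 1 n, E j * (g θ - g (psi n j))|
        ≤ ∑ j ∈ Finset.Icc 1 n, |E j * (g θ - g (psi n j))| :=
          Finset.abs_sum_le_sum_abs _ _
      _ ≤ ∑ j ∈ Finset.Icc 1 n, E j * (((x - Real.cos (psi n j))^2 + δ^2)/(2*δ)) := by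
          apply Finset.sum_le_sum
          intro j _
          rw [abs_mul, abs_of_nonneg (hE0 j)]
          apply mul_le_mul_of_nonneg_left _ (hE0 j)
          have h1 : |g θ - g (psi n j)| ≤ |Real.cos θ - Real.cos (psi n j)| := by
            have := LipschitzOnWith.dist_le_mul hlip (Real.cos θ)
              ⟨Real.neg_one_le_cos θ, Real.cos_le_one θ⟩ (Real.cos (psi n j))
              ⟨Real.neg_one_le_cos _, Real.cos_le_one _⟩
            simpa [Real.dist_eq] using this
          rw [hcx] at h1
          have h2 : |x - Real.cos (psi n j)| ≤ ((x - Real.cos (psi n j))^2 + δ^2)/(2*δ) := by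
            rw [le_div_iff₀ (by positivity)]
            nlinarith [sq_nonneg (|x - Real.cos (psi n j)| - δ), sq_abs (x - Real.cos (psi n j))]
          exact le_trans h1 h2
  have hsplit : (n:ℝ)⁻¹ * ∑ j ∈ Finset.Icc 1 n,
      E j * (((x - Real.cos (psi n j))^2 + δ^2)/(2*δ)) = (Mv + δ^2)/(2*δ) := by
    have hpt : ∀ j : ℕ, E j * (((x - Real.cos (psi n j))^2 + δ^2)/(2*δ))
        = (1/(2*δ)) * (E j * (x - Real.cos (psi n j))^2) + (δ^2/(2*δ)) * E j := by
      intro j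
      field_simp
    rw [Finset.sum_congr rfl (fun j _ => hpt j), Finset.sum_add_distrib,
      ← Finset.mul_sum, ← Finset.mul_sum, hM, hnorm]
    field_simp
  have hρ1 : ρ 1 = Real.cos (Real.pi/((n:ℝ)+2)) := rho_one n ρ hρ
  have hMle : Mv ≤ Real.pi^2/((n:ℝ)+2)^2 := by
    rw [hMvdef, hρ1]
    apply M_bound
    · by_cases hcase : 2 + 2 = 2*n
      · rw [hr2def, if_pos hcase]
        have hge := cos_alpha_ge n hn
        nlinarith [sq_nonneg x]
      · rw [hr2def, if_neg hcase, rho_two n ρ hρ]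
        have hq2 := quad_le n hn
        nlinarith [sq_nonneg x]
    · by_cases hcase : 2 + 2 = 2*n
      · rw [hr2def, if_pos hcase]
        have hn2'' : n = 2 := by omega
        subst hn2''
        have he : (((2:ℕ):ℝ)+2)^2 = 16 := by norm_num
        rw [he]
        nlinarith
      · rw [hr2def, if_neg hcase, rho_two n ρ hρ]
        exact tail_le n hn
  have hfinal : ((Real.pi^2/((n:ℝ)+2)^2) + δ^2)/(2*δ) = Real.pi/((n:ℝ)+2) := by
    rw [hδdef]
    have hm : ((n:ℝ)+2) ≠ 0 := by positivity
    field_simp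
    ring
  have hchain : |f x - qI x| ≤ Real.pi/((n:ℝ)+2) := by
    rw [← hfinal]
    apply le_trans habs
    rw [hsplit]
    gcongr
  have hlast : Real.pi/((n:ℝ)+2) ≤ Real.pi^2/2 * ((n:ℝ)+2)⁻¹ := by
    rw [div_eq_mul_inv]
    apply mul_le_mul_of_nonneg_right _ (by positivity)
    nlinarith
  exact le_trans hchain hlast

lemma Epos (n : ℕ) (ρ : ℕ → ℝ)
    (hρ : ∀ k : ℕ, ρ k =
      (((n : ℝ) - k + 2) * Real.cos (k * Real.pi / (n + 2)) +
        Real.sin (k * Real.pi / (n + 2)) * Real.cot (Real.pi / (n + 2))) / (n + 2)) :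
    ∀ a b : ℝ, 0 ≤ 1 + 2*∑ k ∈ Finset.Icc 1 n, ρ k * (Real.cos ((k:ℝ)*a)*Real.cos ((k:ℝ)*b)) := by
  intro a b
  have h1 := kernel_nonneg n ρ hρ (a-b)
  have h2 := kernel_nonneg n ρ hρ (a+b)
  have hsum : (∑ k ∈ Finset.Icc 1 n, ρ k * Real.cos ((k:ℝ)*(a-b)))
      + (∑ k ∈ Finset.Icc 1 n, ρ k * Real.cos ((k:ℝ)*(a+b)))
      = 2 * ∑ k ∈ Finset.Icc 1 n, ρ k * (Real.cos ((k:ℝ)*a)*Real.cos ((k:ℝ)*b)) := by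
    rw [← Finset.sum_add_distrib, Finset.mul_sum]
    refine Finset.sum_congr rfl (fun k _ => ?_)
    rw [show (k:ℝ)*(a-b) = (k:ℝ)*a - (k:ℝ)*b by ring,
      show (k:ℝ)*(a+b) = (k:ℝ)*a + (k:ℝ)*b by ring, Real.cos_sub, Real.cos_add]
    ring
  linarith

/-- Let `f` be 1-Lipschitz on `[−1,1]` and let `q_n` be the Jackson-damped degree-`n`
Chebyshev approximant (resp. interpolant) of `f`, obtained by multiplying the `k`-th
Chebyshev coefficient by the Jackson damping coefficient
`ρ_k = ((n−k+2)cos(kπ/(n+2)) + sin(kπ/(n+2))cot(π/(n+2)))/(n+2)`.  Then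
`‖f − q_n‖_{[−1,1]} ≤ (π²/2)(n+2)⁻¹`. -/
theorem jackson_damped_chebyshev_bound
    (f : ℝ → ℝ) (hlip : LipschitzOnWith 1 f (Set.Icc (-1) 1))
    (n : ℕ) (hn : 1 ≤ n)
    (ρ : ℕ → ℝ)
    (hρ : ∀ k : ℕ, ρ k =
      (((n : ℝ) - k + 2) * Real.cos (k * Real.pi / (n + 2)) +
        Real.sin (k * Real.pi / (n + 2)) * Real.cot (Real.pi / (n + 2))) / (n + 2))
    (aA : ℕ → ℝ)
    (haA : ∀ k : ℕ, aA k = 2 * ∫ x in (-1 : ℝ)..1,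
      f x * (Polynomial.Chebyshev.T ℝ (k : ℤ)).eval x *
        (Real.pi * Real.sqrt (1 - x ^ 2))⁻¹)
    (node : ℕ → ℝ)
    (hnode : ∀ j : ℕ, node j = -Real.cos (Real.pi * (j - 1 / 2) / n))
    (aI : ℕ → ℝ)
    (haI : ∀ k : ℕ, aI k = 2 * (n : ℝ)⁻¹ * ∑ j ∈ Finset.Icc 1 n,
      f (node j) * (Polynomial.Chebyshev.T ℝ (k : ℤ)).eval (node j))
    (qA qI : ℝ → ℝ)
    (hqA : ∀ x, qA x = aA 0 / 2 + ∑ k ∈ Finset.Icc 1 n,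
      ρ k * aA k * (Polynomial.Chebyshev.T ℝ (k : ℤ)).eval x)
    (hqI : ∀ x, qI x = aI 0 / 2 + ∑ k ∈ Finset.Icc 1 n,
      ρ k * aI k * (Polynomial.Chebyshev.T ℝ (k : ℤ)).eval x) :
    ∀ x ∈ Set.Icc (-1 : ℝ) 1,
      |f x - qA x| ≤ Real.pi ^ 2 / 2 * ((n : ℝ) + 2)⁻¹ ∧
      |f x - qI x| ≤ Real.pi ^ 2 / 2 * ((n : ℝ) + 2)⁻¹ := by
  intro x hx
  constructor
  · exact cont_main f hlip n hn ρ hρ aA haA qA hqA x hx (Epos n ρ hρ)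
  · exact disc_main f hlip n hn ρ hρ node hnode aI haI qI hqI x hx (Epos n ρ hρ)
end
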